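/- arXiv:1308.1456 — 3 statements merged into one kernel-verified Lean document; each statement's English description precedes it below -/
import Mathlib

section
/- Let $q$ be a positive integer and $\chi$ a primitive multiplicative character modulo $q$. Then for all integers $u_1, u_2, \lambda$, we have $\left|\sum_{n=1}^{q}\chi(n+u_1)\overline{\chi}(n+u_2)e^{2\pi i \lambda n/q}\right| = \left|\sum_{n=1}^{q}\chi(n+\lambda)\overline{\chi}(n)e^{2\pi i (u_1-u_2)n/q}\right|$. -/
open Finset Complex AddChar ZMod

section Aux

variable {q : ℕ} [NeZero q]

private lemma sum_range_zmod (G : ZMod q → ℂ) :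
    ∑ n ∈ Finset.range q, G (n : ZMod q) = ∑ x : ZMod q, G x := by
  apply Finset.sum_bij (fun n _ => ((n : ℕ) : ZMod q))
  · intro a _; exact Finset.mem_univ _
  · intro a ha b hb h
    rw [Finset.mem_range] at ha hb
    have := congrArg ZMod.val h
    rwa [ZMod.val_cast_of_lt ha, ZMod.val_cast_of_lt hb] at this
  · intro x _
    exact ⟨x.val, Finset.mem_range.mpr x.val_lt, ZMod.natCast_rightInverse x⟩
  · intro a _; rfl

private lemma sum_Icc_zmod (G : ZMod q → ℂ) :
    ∑ n ∈ Finset.Icc 1 q, G ((n : ℕ) : ZMod q) = ∑ x : ZMod q, G x := by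
  rw [← Finset.Ico_add_one_right_eq_Icc, Finset.sum_Ico_eq_sum_range]
  have h : ∀ i : ℕ, G (((1 + i : ℕ)) : ZMod q) = (fun x => G (1 + x)) ((i : ℕ) : ZMod q) := by
    intro i; push_cast; rfl
  simp only [Nat.succ_sub_one, Nat.add_sub_cancel, h]
  rw [sum_range_zmod (fun x => G (1 + x))]
  exact Fintype.sum_equiv (Equiv.addLeft 1) _ _ (fun x => rfl)

private lemma abs_psi (t : ZMod q) : ‖stdAddChar t‖ = 1 := by
  rw [ZMod.stdAddChar_apply, Circle.norm_coe]

private lemma conj_psi (t : ZMod q) :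
    (starRingEnd ℂ) (stdAddChar t) = stdAddChar (-t) := by
  rw [AddChar.map_neg_eq_inv, Complex.inv_eq_conj (abs_psi t)]

private lemma tau_ne_zero {χ : DirichletCharacter ℂ q} (hχ : χ.IsPrimitive) :
    gaussSum χ stdAddChar ≠ 0 := by
  intro h
  have h0 : ZMod.dft (⇑χ) = 0 := by
    funext k
    rw [ZMod.dft_apply]
    have := hχ.fourierTransform_eq_inv_mul_gaussSum k
    rw [ZMod.dft_apply] at this
    rw [this, h, mul_zero, Pi.zero_apply]
  have hz : (⇑χ : ZMod q → ℂ) = 0 := by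
    have := (ZMod.dft (N := q) (E := ℂ)).injective (h0.trans (map_zero _).symm)
    exact this
  have h1 : χ 1 = 0 := congrFun hz 1
  simp at h1

private lemma keyA {χ : DirichletCharacter ℂ q} (hχ : χ.IsPrimitive) (c : ZMod q) :
    ∑ y : ZMod q, χ y * stdAddChar (c * y) = χ⁻¹ c * gaussSum χ stdAddChar := by
  rw [← gaussSum_mulShift_of_isPrimitive stdAddChar hχ c]
  simp [gaussSum, AddChar.mulShift_apply]

private lemma keyA' {χ : DirichletCharacter ℂ q} (hχ : χ.IsPrimitive) (a c : ZMod q) :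
    ∑ x : ZMod q, χ (x + a) * stdAddChar (c * x)
      = stdAddChar (-(c * a)) * (χ⁻¹ c * gaussSum χ stdAddChar) := by
  have h := Fintype.sum_equiv (Equiv.addRight a)
      (fun x : ZMod q => χ (x + a) * stdAddChar (c * x))
      (fun z : ZMod q => χ z * stdAddChar (c * z + -(c * a)))
      (fun x => by
        simp only [Equiv.coe_addRight]
        congr 1
        congr 1
        ring)
  rw [h, ← keyA hχ c, Finset.mul_sum]
  refine Finset.sum_congr rfl fun z _ => ?_
  simp only [map_add_eq_mul]
  ring

private lemma S_abs_symm {χ : DirichletCharacter ℂ q} (hχ : χ.IsPrimitive) (a b : ZMod q) :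
    ‖∑ x : ZMod q, χ (x + a) * χ⁻¹ x * stdAddChar (b * x)‖ =
    ‖∑ x : ZMod q, χ (x + b) * χ⁻¹ x * stdAddChar (a * x)‖ := by
  set τ := gaussSum χ stdAddChar with hτdef
  set S := ∑ x : ZMod q, χ (x + a) * χ⁻¹ x * stdAddChar (b * x) with hS
  set S' := ∑ x : ZMod q, χ (x + b) * χ⁻¹ x * stdAddChar (a * x) with hS'
  set T := ∑ y : ZMod q, χ⁻¹ (y + b) * χ y * stdAddChar (-(a * y)) with hT
  have h1 : τ * S = ∑ x : ZMod q, ∑ y : ZMod q,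
      (χ (x + a) * stdAddChar (b * x)) * (χ y * stdAddChar (x * y)) := by
    rw [hS, Finset.mul_sum]
    refine Finset.sum_congr rfl fun x _ => ?_
    rw [← Finset.mul_sum, keyA hχ x]
    ring
  have h2 : (∑ x : ZMod q, ∑ y : ZMod q,
      (χ (x + a) * stdAddChar (b * x)) * (χ y * stdAddChar (x * y)))
      = ∑ y : ZMod q, χ y * (stdAddChar (-((b + y) * a)) * (χ⁻¹ (b + y) * τ)) := by
    rw [Finset.sum_comm]
    refine Finset.sum_congr rfl fun y _ => ?_
    rw [← keyA' hχ a (b + y), Finset.mul_sum]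
    refine Finset.sum_congr rfl fun x _ => ?_
    rw [show (b + y) * x = b * x + x * y by ring, map_add_eq_mul]
    ring
  have h3 : (∑ y : ZMod q, χ y * (stdAddChar (-((b + y) * a)) * (χ⁻¹ (b + y) * τ)))
      = τ * (stdAddChar (-(a * b)) * T) := by
    rw [hT, Finset.mul_sum, Finset.mul_sum]
    refine Finset.sum_congr rfl fun y _ => ?_
    rw [show -((b + y) * a) = -(a * b) + -(a * y) by ring, map_add_eq_mul,
      show b + y = y + b from add_comm b y]
    ring
  have hSeq : S = stdAddChar (-(a * b)) * T :=
    mul_left_cancel₀ (tau_ne_zero hχ) ((h1.trans h2).trans h3)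
  have hTconj : T = (starRingEnd ℂ) S' := by
    rw [hS', map_sum, hT]
    refine Finset.sum_congr rfl fun x _ => ?_
    rw [map_mul, map_mul, conj_psi]
    rw [show (starRingEnd ℂ) (χ (x + b)) = star (χ (x + b)) from rfl, MulChar.star_apply']
    rw [show (starRingEnd ℂ) (χ⁻¹ x) = star (χ⁻¹ x) from rfl, MulChar.star_apply', inv_inv]
  rw [hSeq, norm_mul, abs_psi, one_mul, hTconj, Complex.norm_conj]

private lemma S_shift {χ : DirichletCharacter ℂ q} (u₁ u₂ l : ZMod q) :
    ∑ x : ZMod q, χ (x + u₁) * χ⁻¹ (x + u₂) * stdAddChar (l * x)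
      = stdAddChar (-(l * u₂)) *
        ∑ x : ZMod q, χ (x + (u₁ - u₂)) * χ⁻¹ x * stdAddChar (l * x) := by
  have h := Fintype.sum_equiv (Equiv.addRight u₂)
      (fun x : ZMod q => χ (x + u₁) * χ⁻¹ (x + u₂) * stdAddChar (l * x))
      (fun z : ZMod q => χ (z + (u₁ - u₂)) * χ⁻¹ z * stdAddChar (l * z + -(l * u₂)))
      (fun x => by
        simp only [Equiv.coe_addRight]
        congr 2
        · ring_nf
        · ring_nf)
  rw [h, Finset.mul_sum]
  refine Finset.sum_congr rfl fun z _ => ?_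
  simp only [map_add_eq_mul]
  ring

end Aux

theorem stmt_0 (q : ℕ) (hq : 0 < q) (χ : DirichletCharacter ℂ q)
    (hχ : χ.IsPrimitive) (u₁ u₂ lam : ℤ) :
    ‖(∑ n ∈ Finset.Icc 1 q,
        χ (((n : ℤ) + u₁ : ℤ) : ZMod q) *
          (starRingEnd ℂ) (χ (((n : ℤ) + u₂ : ℤ) : ZMod q)) *
          Complex.exp (2 * Real.pi * Complex.I * (lam : ℂ) * (n : ℂ) / (q : ℂ)))‖ =
    ‖(∑ n ∈ Finset.Icc 1 q,
        χ (((n : ℤ) + lam : ℤ) : ZMod q) *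
          (starRingEnd ℂ) (χ ((n : ℤ) : ZMod q)) *
          Complex.exp (2 * Real.pi * Complex.I * ((u₁ - u₂ : ℤ) : ℂ) * (n : ℂ) / (q : ℂ)))‖ := by
  haveI : NeZero q := ⟨hq.ne'⟩
  have hexp : ∀ (m : ℤ) (n : ℕ),
      Complex.exp (2 * Real.pi * Complex.I * (m : ℂ) * (n : ℂ) / (q : ℂ))
        = stdAddChar ((m : ZMod q) * ((n : ℕ) : ZMod q)) := by
    intro m n
    have h1 : ((m * n : ℤ) : ZMod q) = (m : ZMod q) * ((n : ℕ) : ZMod q) := by push_cast; rfl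
    rw [← h1, ZMod.stdAddChar_coe]
    congr 1
    push_cast
    ring
  have hLHS : (∑ n ∈ Finset.Icc 1 q,
      χ (((n : ℤ) + u₁ : ℤ) : ZMod q) *
        (starRingEnd ℂ) (χ (((n : ℤ) + u₂ : ℤ) : ZMod q)) *
        Complex.exp (2 * Real.pi * Complex.I * (lam : ℂ) * (n : ℂ) / (q : ℂ)))
      = ∑ x : ZMod q, χ (x + (u₁ : ZMod q)) * χ⁻¹ (x + (u₂ : ZMod q)) *
          stdAddChar ((lam : ZMod q) * x) := by
    rw [← sum_Icc_zmod (fun x : ZMod q =>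
      χ (x + (u₁ : ZMod q)) * χ⁻¹ (x + (u₂ : ZMod q)) * stdAddChar ((lam : ZMod q) * x))]
    refine Finset.sum_congr rfl fun n _ => ?_
    rw [hexp lam n]
    congr 1
    congr 1
    · congr 1; push_cast; ring
    · rw [show (starRingEnd ℂ) (χ (((n : ℤ) + u₂ : ℤ) : ZMod q))
          = star (χ (((n : ℤ) + u₂ : ℤ) : ZMod q)) from rfl, MulChar.star_apply']
      congr 1
      push_cast
      ring
  have hRHS : (∑ n ∈ Finset.Icc 1 q,
      χ (((n : ℤ) + lam : ℤ) : ZMod q) *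
        (starRingEnd ℂ) (χ ((n : ℤ) : ZMod q)) *
        Complex.exp (2 * Real.pi * Complex.I * ((u₁ - u₂ : ℤ) : ℂ) * (n : ℂ) / (q : ℂ)))
      = ∑ x : ZMod q, χ (x + (lam : ZMod q)) * χ⁻¹ x *
          stdAddChar (((u₁ : ZMod q) - (u₂ : ZMod q)) * x) := by
    rw [← sum_Icc_zmod (fun x : ZMod q =>
      χ (x + (lam : ZMod q)) * χ⁻¹ x * stdAddChar (((u₁ : ZMod q) - (u₂ : ZMod q)) * x))]
    refine Finset.sum_congr rfl fun n _ => ?_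
    rw [hexp (u₁ - u₂) n]
    congr 1
    congr 1
    · congr 1; push_cast; ring
    · rw [show (starRingEnd ℂ) (χ ((n : ℤ) : ZMod q))
          = star (χ ((n : ℤ) : ZMod q)) from rfl, MulChar.star_apply']
      congr 1
      push_cast
      ring
    · congr 2
      push_cast
      ring
  rw [hLHS, hRHS]
  rw [S_shift (u₁ : ZMod q) (u₂ : ZMod q) (lam : ZMod q)]
  rw [norm_mul, abs_psi, one_mul]
  exact S_abs_symm hχ ((u₁ : ZMod q) - (u₂ : ZMod q)) (lam : ZMod q)
end

section
/- Let $q$ be a positive integer, $\chi$ a primitive character modulo $q$, and $M, N, a$ integers with $\gcd(a,q)=1$, $N \ge 1$. Then there is an absolute constant $C$ such that $\left|\sum_{\substack{M < n \le M+N \\ \gcd(n,q)=1}} \chi(n+a)\right| \le C\tau(q)\left(q^{1/2}\log q + Nq^{-1/2}\right)$, where $\tau(q)$ is the number of divisors of $q$. -/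
open Finset Complex ZMod AddChar Real

noncomputable def Complex.abs : AbsoluteValue ℂ ℝ := IsAbsoluteValue.toAbsoluteValue (norm : ℂ → ℝ)

lemma Complex.abs_conj (z : ℂ) : Complex.abs ((starRingEnd ℂ) z) = Complex.abs z :=
  show ‖_‖ = ‖_‖ from Complex.norm_conj z

lemma Complex.abs_natCast (n : ℕ) : Complex.abs (n : ℂ) = n :=
  show ‖(n : ℂ)‖ = n from Complex.norm_natCast n

lemma Complex.abs_intCast (n : ℤ) : Complex.abs (n : ℂ) = |(n : ℝ)| :=
  show ‖(n : ℂ)‖ = |(n : ℝ)| from Complex.norm_intCast n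

lemma Complex.abs_apply (z : ℂ) : Complex.abs z = Real.sqrt (Complex.normSq z) :=
  show ‖z‖ = _ from Complex.norm_def z

section PVaux

variable {q : ℕ} [NeZero q]



lemma psi_neg (c : ZMod q) : stdAddChar (-c) = (stdAddChar c)⁻¹ := by
  have h := AddChar.map_add_eq_mul (stdAddChar (N := q)) (-c) c
  rw [neg_add_cancel, AddChar.map_zero_eq_one] at h
  exact eq_inv_of_mul_eq_one_left h.symm

lemma psi_abs (c : ZMod q) : Complex.abs (stdAddChar c) = 1 := by
  rw [ZMod.stdAddChar_apply]; exact Circle.norm_coe _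

lemma psi_conj (c : ZMod q) : (starRingEnd ℂ) (stdAddChar c) = stdAddChar (-c) := by
  rw [psi_neg, Complex.inv_eq_conj]
  rw [show ‖stdAddChar c‖ = Complex.abs (stdAddChar c) from rfl]; exact psi_abs c

lemma gauss_abs {χ : DirichletCharacter ℂ q} (hχ : χ.IsPrimitive) :
    Complex.abs (gaussSum χ ZMod.stdAddChar) = Real.sqrt q := by
  set τ := gaussSum χ ZMod.stdAddChar with hτ
  have key : τ * (starRingEnd ℂ) τ = (q : ℂ) := by
    have h1 := congrFun (ZMod.dft_dft (N := q) (χ : ZMod q → ℂ)) (-1)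
    rw [ZMod.dft_apply] at h1
    have h2 : ∀ k : ZMod q, (𝓕 (χ : ZMod q → ℂ)) k = χ⁻¹ (-k) * τ :=
      fun k => hχ.fourierTransform_eq_inv_mul_gaussSum k
    simp only [h2, smul_eq_mul, neg_neg, map_one, mul_one] at h1
    have h3 : (starRingEnd ℂ) τ = ∑ k : ZMod q, χ⁻¹ (-k) * stdAddChar (-(k * -1)) := by
      rw [hτ, gaussSum, map_sum]
      refine Fintype.sum_equiv (Equiv.neg (ZMod q)) _ _ fun k => ?_
      rw [Equiv.neg_apply, map_mul, psi_conj, show (starRingEnd ℂ) (χ k)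
        = star (χ k) from rfl, MulChar.star_apply']
      ring_nf
    rw [h3, Finset.mul_sum, ← h1]
    exact Finset.sum_congr rfl fun k _ => by ring
  have h := congrArg Complex.abs key
  rw [map_mul, Complex.abs_conj, Complex.abs_natCast] at h
  rw [← h]
  exact (Real.sqrt_mul_self (Complex.abs.nonneg _)).symm



lemma chi_inversion {χ : DirichletCharacter ℂ q} (hχ : χ.IsPrimitive) (x : ZMod q) :
    χ x = (q : ℂ)⁻¹ * ∑ k : ZMod q, stdAddChar (k * x) * (χ⁻¹ (-k) * gaussSum χ ZMod.stdAddChar) := by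
  have h0 : (𝓕⁻ (𝓕 (χ : ZMod q → ℂ))) x = χ x := by rw [LinearEquiv.symm_apply_apply]
  rw [← h0, ZMod.invDFT_apply]
  simp only [smul_eq_mul, hχ.fourierTransform_eq_inv_mul_gaussSum]

lemma psi_zpow (c : ZMod q) (m : ℤ) : stdAddChar (c * (m : ZMod q)) = stdAddChar c ^ m := by
  have hne : stdAddChar c ≠ 0 := fun h => by simpa [h] using psi_abs c
  induction m using Int.induction_on with
  | zero => simp
  | succ n ih =>
      rw [Int.cast_add, Int.cast_one, mul_add, mul_one, AddChar.map_add_eq_mul, ih,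
        zpow_add_one₀ hne]
  | pred n ih =>
      rw [Int.cast_sub, Int.cast_one, mul_sub, mul_one, sub_eq_add_neg,
        AddChar.map_add_eq_mul, ih, psi_neg, zpow_sub_one₀ hne]

lemma sum_Ioc_int (f : ℤ → ℂ) (A L : ℤ) (hL : 0 ≤ L) :
    ∑ m ∈ Finset.Ioc A (A + L), f m = ∑ i ∈ Finset.range L.toNat, f (A + 1 + i) := by
  refine Finset.sum_nbij' (fun m => (m - A - 1).toNat) (fun i => A + 1 + (i : ℤ)) ?_ ?_ ?_ ?_ ?_
  · intro m hm; simp only [Finset.mem_Ioc] at hm; simp only [Finset.mem_range]; omega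
  · intro i hi; simp only [Finset.mem_range] at hi; simp only [Finset.mem_Ioc]; omega
  · intro m hm; simp only [Finset.mem_Ioc] at hm; omega
  · intro i hi; simp only [Finset.mem_range] at hi; omega
  · intro m hm; simp only [Finset.mem_Ioc] at hm; congr 1; omega

lemma geom_bound {z : ℂ} (hz : Complex.abs z = 1) (hz1 : z ≠ 1) (A L : ℤ) (hL : 0 ≤ L) :
    Complex.abs (∑ m ∈ Finset.Ioc A (A + L), z ^ m) ≤ 2 / Complex.abs (1 - z) := by
  have hne : z ≠ 0 := fun h => by simp [h] at hz
  have hpos : 0 < Complex.abs (1 - z) :=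
    Complex.abs.pos (sub_ne_zero.mpr (fun h => hz1 h.symm))
  rw [sum_Ioc_int (fun m => z ^ m) A L hL]
  have : ∀ i ∈ Finset.range L.toNat, z ^ (A + 1 + (i : ℤ)) = z ^ (A+1) * z ^ (i : ℕ) := by
    intro i _; rw [zpow_add₀ hne, zpow_natCast]
  rw [Finset.sum_congr rfl this, ← Finset.mul_sum, map_mul, geom_sum_eq hz1,
    map_zpow₀, hz, one_zpow, one_mul, map_div₀]
  rw [Complex.abs.map_sub z 1]
  gcongr
  calc Complex.abs (z ^ L.toNat - 1) ≤ Complex.abs (z ^ L.toNat) + 1 := by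
        simpa using Complex.abs.sub_le_add (z ^ L.toNat) 1
    _ ≤ 2 := by rw [map_pow, hz, one_pow]; norm_num

end PVaux

section PVreal


lemma abs_one_sub_exp (θ : ℝ) :
    Complex.abs (1 - Complex.exp (θ * Complex.I)) = 2 * |Real.sin (θ / 2)| := by
  rw [Complex.exp_mul_I, Complex.abs_apply, Complex.normSq_apply]
  have h1 : (1 - (Complex.cos θ + Complex.sin θ * Complex.I)).re = 1 - Real.cos θ := by
    simp [Complex.cos_ofReal_re]
  have h2 : (1 - (Complex.cos θ + Complex.sin θ * Complex.I)).im = - Real.sin θ := by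
    simp [Complex.sin_ofReal_re]
  rw [h1, h2]
  have hhalf := Real.sin_sq_eq_half_sub (θ / 2)
  rw [show 2 * (θ/2) = θ by ring] at hhalf
  have hc : Real.cos θ = 1 - 2 * Real.sin (θ / 2) ^ 2 := by linarith
  have hs : Real.sin θ = 2 * Real.sin (θ/2) * Real.cos (θ/2) := by
    rw [← Real.sin_two_mul]; ring_nf
  rw [hc, hs]
  have key : (1 - (1 - 2 * Real.sin (θ / 2) ^ 2)) * (1 - (1 - 2 * Real.sin (θ / 2) ^ 2)) +
      -(2 * Real.sin (θ/2) * Real.cos (θ/2)) * -(2 * Real.sin (θ/2) * Real.cos (θ/2))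
      = (2 * |Real.sin (θ / 2)|) ^ 2 := by
    have h3 := Real.sin_sq_add_cos_sq (θ/2)
    have habs : |Real.sin (θ/2)| ^ 2 = Real.sin (θ/2) ^ 2 := sq_abs _
    nlinarith
  rw [key]
  exact Real.sqrt_sq (by positivity)

lemma sin_lower (Q r : ℕ) (hr : 0 < r) (hrQ : r < Q) :
    2 * min (r : ℝ) ((Q : ℝ) - r) / Q ≤ Real.sin (π * r / Q) := by
  have hQ : (0:ℝ) < Q := by exact_mod_cast hr.trans hrQ
  have hrQ' : (r : ℝ) < Q := by exact_mod_cast hrQ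
  rcases le_or_gt (2*r) Q with h | h
  · have h' : (2 * r : ℝ) ≤ Q := by exact_mod_cast h
    rw [min_eq_left (by linarith)]
    have hx0 : 0 ≤ π * r / Q := by positivity
    have hx2 : π * r / Q ≤ π / 2 := by
      rw [div_le_div_iff₀ hQ (by norm_num : (0:ℝ) < 2)]
      nlinarith [Real.pi_pos]
    calc 2 * (r:ℝ) / Q = 2 / π * (π * r / Q) := by field_simp
      _ ≤ Real.sin (π * r / Q) := Real.mul_le_sin hx0 hx2
  · have h' : (Q : ℝ) < 2 * r := by exact_mod_cast h
    rw [min_eq_right (by linarith)]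
    have hsym : Real.sin (π * r / Q) = Real.sin (π * ((Q:ℝ) - r) / Q) := by
      rw [← Real.sin_pi_sub]; congr 1; field_simp
    rw [hsym]
    have hx0 : 0 ≤ π * ((Q:ℝ) - r) / Q :=
      div_nonneg (mul_nonneg Real.pi_pos.le (by linarith)) hQ.le
    have hx2 : π * ((Q:ℝ) - r) / Q ≤ π / 2 := by
      rw [div_le_div_iff₀ hQ (by norm_num : (0:ℝ) < 2)]
      nlinarith [Real.pi_pos]
    calc 2 * ((Q:ℝ) - r) / Q = 2 / π * (π * ((Q:ℝ) - r) / Q) := by field_simp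
      _ ≤ _ := Real.mul_le_sin hx0 hx2


lemma harmonic_bound (Q : ℕ) : ∑ r ∈ Finset.Ico 1 Q, (1 / r : ℝ) ≤ 1 + Real.log Q := by
  rcases Nat.eq_zero_or_pos Q with h | hQ
  · simp [h]
  have h1 : Finset.Ico 1 Q = Finset.Icc 1 (Q - 1) := by
    ext x; simp [Finset.mem_Ico, Finset.mem_Icc]; omega
  have h2 : ∑ r ∈ Finset.Icc 1 (Q-1), (1 / r : ℝ) = (harmonic (Q-1) : ℝ) := by
    rw [harmonic_eq_sum_Icc]
    push_cast
    exact Finset.sum_congr rfl fun r _ => (one_div _)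
  rw [h1, h2]
  have h3 := harmonic_le_one_add_log (Q-1)
  have h4 : Real.log (Q-1 : ℕ) ≤ Real.log Q := by
    rcases Nat.eq_zero_or_pos (Q-1) with h | h
    · rw [h]; simp [Real.log_natCast_nonneg]
    · apply Real.log_le_log (by exact_mod_cast h)
      exact_mod_cast Nat.sub_le Q 1
  have : (harmonic (Q-1) : ℝ) ≤ 1 + Real.log (Q-1 : ℕ) := by exact_mod_cast h3
  linarith

lemma sum_inv_sin (Q : ℕ) (hQ : 0 < Q) :
    ∑ r ∈ Finset.Ico 1 Q, 1 / Real.sin (π * r / Q) ≤ Q * (1 + Real.log Q) := by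
  have hQR : (0:ℝ) < Q := by exact_mod_cast hQ
  have step : ∀ r ∈ Finset.Ico 1 Q,
      1 / Real.sin (π * r / Q) ≤ (Q:ℝ)/2 * (1/r + 1/((Q:ℝ)-r)) := by
    intro r hr
    rw [Finset.mem_Ico] at hr
    obtain ⟨hr1, hrQ⟩ := hr
    have hrR : (0:ℝ) < r := by exact_mod_cast hr1
    have hrQR : (r:ℝ) < Q := by exact_mod_cast hrQ
    have hmin : (0:ℝ) < min (r : ℝ) ((Q : ℝ) - r) := lt_min hrR (by linarith)
    have hsin := sin_lower Q r hr1 hrQ   -- 2 * min / Q ≤ sin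
    have hsinpos : 0 < Real.sin (π * r / Q) := lt_of_lt_of_le (by positivity) hsin
    have h5 : 1 / Real.sin (π * r / Q) ≤ 1 / (2 * min (r : ℝ) ((Q : ℝ) - r) / Q) :=
      one_div_le_one_div_of_le (by positivity) hsin
    refine h5.trans ?_
    rw [one_div_div, div_le_iff₀ (by positivity)]
    have hminle : min (r:ℝ) ((Q:ℝ)-r) * (1/r + 1/((Q:ℝ)-r)) ≥ 1 := by
      rcases min_le_iff.mp (le_refl (min (r:ℝ) ((Q:ℝ)-r))) with _ | _
      all_goals
        rcases le_total (r:ℝ) ((Q:ℝ)-r) with hc | hc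
        · rw [min_eq_left hc]
          have : (0:ℝ) < (Q:ℝ) - r := by linarith
          have e1 : (r:ℝ) * (1/r) = 1 := by field_simp
          have e2 : (0:ℝ) ≤ (r:ℝ) * (1/((Q:ℝ)-r)) := by positivity
          nlinarith
        · rw [min_eq_right hc]
          have : (0:ℝ) < (Q:ℝ) - r := by linarith
          have e1 : ((Q:ℝ)-r) * (1/((Q:ℝ)-r)) = 1 := by field_simp
          have e2 : (0:ℝ) ≤ ((Q:ℝ)-r) * (1/r) := by positivity
          nlinarith
    nlinarith [hmin]
  refine (Finset.sum_le_sum step).trans ?_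
  rw [← Finset.mul_sum]
  have hsplit : ∑ r ∈ Finset.Ico 1 Q, (1/(r:ℝ) + 1/((Q:ℝ)-r))
      = ∑ r ∈ Finset.Ico 1 Q, (1/(r:ℝ)) + ∑ r ∈ Finset.Ico 1 Q, 1/((Q:ℝ)-r) :=
    Finset.sum_add_distrib
  have hrefl : ∑ r ∈ Finset.Ico 1 Q, (1/((Q:ℝ)-r)) = ∑ r ∈ Finset.Ico 1 Q, (1/(r:ℝ)) := by
    refine Finset.sum_nbij' (fun r => Q - r) (fun r => Q - r) ?_ ?_ ?_ ?_ ?_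
    · intro r hr; simp only [Finset.mem_Ico] at hr ⊢; omega
    · intro r hr; simp only [Finset.mem_Ico] at hr ⊢; omega
    · intro r hr; rw [Finset.mem_Ico] at hr; omega
    · intro r hr; rw [Finset.mem_Ico] at hr; omega
    · intro r hr; rw [Finset.mem_Ico] at hr
      have : ((Q - r : ℕ) : ℝ) = (Q:ℝ) - r := by
        have : r ≤ Q := by omega
        push_cast [this]; ring
      rw [this]
  have hharm := harmonic_bound Q
  calc (Q:ℝ)/2 * ∑ r ∈ Finset.Ico 1 Q, (1/(r:ℝ) + 1/((Q:ℝ)-r))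
      = (Q:ℝ) * ∑ r ∈ Finset.Ico 1 Q, (1/(r:ℝ)) := by rw [hsplit, hrefl]; ring
    _ ≤ Q * (1 + Real.log Q) := by
        apply mul_le_mul_of_nonneg_left hharm hQR.le

end PVreal

section PVcore

variable {q : ℕ} [NeZero q]




lemma zmod_sum_range (f : ZMod q → ℝ) : ∑ k : ZMod q, f k = ∑ i ∈ Finset.range q, f ↑i := by
  refine Finset.sum_nbij' (fun k => ZMod.val k) (fun i => (↑i : ZMod q)) ?_ ?_ ?_ ?_ ?_
  · intro k _; simp only [Finset.mem_range]; exact ZMod.val_lt k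
  · intro i _; exact Finset.mem_univ _
  · intro k _; exact ZMod.natCast_rightInverse k
  · intro i hi; simp only [Finset.mem_range] at hi; exact ZMod.val_cast_of_lt hi
  · intro k _; rw [ZMod.natCast_rightInverse k]

lemma sum_mod_block (g : ℕ → ℝ) (d Q : ℕ) :
    ∑ i ∈ Finset.range (d * Q), g (i % Q) = d * ∑ r ∈ Finset.range Q, g r := by
  induction d with
  | zero => simp
  | succ d ih =>
    rw [Nat.succ_mul, Finset.sum_range_add, ih]
    have : ∀ x ∈ Finset.range Q, g ((d * Q + x) % Q) = g x := by
      intro x hx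
      simp only [Finset.mem_range] at hx
      congr 1
      rw [Nat.add_comm, Nat.add_mul_mod_self_right, Nat.mod_eq_of_lt hx]
    rw [Finset.sum_congr rfl this]
    push_cast
    ring

lemma core_bound {χ : DirichletCharacter ℂ q} (hχ : χ.IsPrimitive)
    (d : ℕ) (hd : d ∣ q) (hd0 : 0 < d) (a A L : ℤ) (hL : 0 ≤ L) :
    Complex.abs (∑ m ∈ Finset.Ioc A (A + L), χ ((d * m + a : ℤ) : ZMod q)) ≤
      ((d : ℝ) * L + q * (1 + Real.log q)) / Real.sqrt q := by
  have hq0 : 0 < q := Nat.pos_of_ne_zero (NeZero.ne q)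
  set τ := gaussSum χ ZMod.stdAddChar with hτ
  set Q := q / d with hQdef
  have hqQ : d * Q = q := Nat.mul_div_cancel' hd
  have hQ0 : 0 < Q := Nat.div_pos (Nat.le_of_dvd hq0 hd) hd0
  -- rewrite each summand via Fourier inversion
  have hrw : ∀ m : ℤ, χ ((d * m + a : ℤ) : ZMod q)
      = (q:ℂ)⁻¹ * ∑ k : ZMod q, (χ⁻¹ (-k) * τ * stdAddChar (k * (a : ZMod q)))
          * (stdAddChar (k * (d : ZMod q))) ^ m := by
    intro m
    rw [chi_inversion hχ]
    congr 1
    refine Finset.sum_congr rfl fun k _ => ?_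
    have harg : ((d * m + a : ℤ) : ZMod q) = (a : ZMod q) + (d : ZMod q) * (m : ZMod q) := by
      push_cast; ring
    rw [harg, mul_add, AddChar.map_add_eq_mul,
      show k * ((d:ZMod q) * (m:ZMod q)) = (k * (d:ZMod q)) * ((m : ℤ) : ZMod q) by
        push_cast; ring,
      psi_zpow (k * (d:ZMod q)) m]
    ring
  rw [Finset.sum_congr rfl fun m _ => hrw m, ← Finset.mul_sum, Finset.sum_comm]
  -- now bound
  have habs1 : ∀ k : ZMod q,
      Complex.abs (∑ m ∈ Finset.Ioc A (A + L),
        (χ⁻¹ (-k) * τ * stdAddChar (k * (a : ZMod q))) * (stdAddChar (k * (d : ZMod q))) ^ m)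
      ≤ Real.sqrt q * Complex.abs (∑ m ∈ Finset.Ioc A (A + L),
          (stdAddChar (k * (d : ZMod q))) ^ m) := by
    intro k
    rw [← Finset.mul_sum, map_mul]
    gcongr
    rw [map_mul, map_mul, psi_abs, mul_one,
      show Complex.abs τ = Real.sqrt q from gauss_abs hχ]
    calc ‖χ⁻¹ (-k)‖ * Real.sqrt q ≤ 1 * Real.sqrt q := by
          gcongr; exact DirichletCharacter.norm_le_one χ⁻¹ (-k)
      _ = Real.sqrt q := one_mul _
  -- key sum bound
  set g : ZMod q → ℝ := fun c => Complex.abs (∑ m ∈ Finset.Ioc A (A + L), stdAddChar c ^ m)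
    with hg
  have key : ∑ k : ZMod q, g (k * (d : ZMod q)) ≤ (d : ℝ) * L + q * (1 + Real.log q) := by
    have e1 : ∀ i : ℕ, ((i : ZMod q) * (d : ZMod q)) = ((d * (i % Q) : ℕ) : ZMod q) := by
      intro i
      rw [← Nat.cast_mul, ZMod.natCast_eq_natCast_iff]
      show (i * d) % q = (d * (i % Q)) % q
      conv_lhs => rw [← Nat.div_add_mod i Q]
      rw [show (Q * (i / Q) + i % Q) * d = d * (i % Q) + (i / Q) * (d * Q) by ring, hqQ,
        Nat.add_mul_mod_self_right]
    calc ∑ k : ZMod q, g (k * (d : ZMod q))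
        = ∑ i ∈ Finset.range q, g ((i : ZMod q) * (d : ZMod q)) :=
          zmod_sum_range (fun k => g (k * (d : ZMod q)))
      _ = ∑ i ∈ Finset.range (d * Q), g ((d * (i % Q) : ℕ) : ZMod q) := by
          rw [hqQ]; exact Finset.sum_congr rfl fun i _ => by rw [e1]
      _ = d * ∑ r ∈ Finset.range Q, g ((d * r : ℕ) : ZMod q) :=
          sum_mod_block (fun r => g ((d * r : ℕ) : ZMod q)) d Q
      _ ≤ (d : ℝ) * L + q * (1 + Real.log q) := by
          have hsplit : ∑ r ∈ Finset.range Q, g ((d * r : ℕ) : ZMod q)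
              = g ((d * 0 : ℕ) : ZMod q) + ∑ r ∈ Finset.Ico 1 Q, g ((d * r : ℕ) : ZMod q) := by
            rw [Finset.range_eq_Ico, Finset.sum_eq_sum_Ico_succ_bot hQ0]
          have h0 : g ((d * 0 : ℕ) : ZMod q) = (L : ℝ) := by
            rw [hg]
            simp only [Nat.mul_zero, Nat.cast_zero, AddChar.map_zero_eq_one, one_zpow]
            rw [Finset.sum_const, Int.card_Ioc]
            simp only [add_sub_cancel_left, nsmul_eq_mul, mul_one]
            rw [Complex.abs_natCast]
            exact_mod_cast Int.toNat_of_nonneg hL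
          have hr : ∀ r ∈ Finset.Ico 1 Q, g ((d * r : ℕ) : ZMod q) ≤ 1 / Real.sin (π * r / Q) := by
            intro r hrr
            rw [Finset.mem_Ico] at hrr
            obtain ⟨hr1, hrQ⟩ := hrr
            have hdr_lt : d * r < q := by
              calc d * r < d * Q := by exact (mul_lt_mul_iff_right₀ hd0).mpr hrQ
                _ = q := hqQ
            have hdr_pos : 0 < d * r := Nat.mul_pos hd0 hr1
            -- the value of psi
            have hval : stdAddChar ((d * r : ℕ) : ZMod q)
                = Complex.exp ((2 * π * r / Q : ℝ) * Complex.I) := by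
              have : ((d * r : ℕ) : ZMod q) = (((d * r : ℕ) : ℤ) : ZMod q) := by push_cast; ring
              rw [this, ZMod.stdAddChar_coe]
              congr 1
              have hdR : (d:ℂ) ≠ 0 := by exact_mod_cast hd0.ne'
              have hQR : (Q:ℂ) ≠ 0 := by exact_mod_cast hQ0.ne'
              have hqR : (q:ℂ) ≠ 0 := by exact_mod_cast hq0.ne'
              have : (q : ℂ) = (d : ℂ) * Q := by exact_mod_cast hqQ.symm
              rw [this]
              push_cast
              field_simp
            have hne0 : ((d * r : ℕ) : ZMod q) ≠ 0 := by
              rw [Ne, ZMod.natCast_eq_zero_iff]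
              intro hdvd
              exact absurd (Nat.le_of_dvd hdr_pos hdvd) (not_le.mpr hdr_lt)
            have hne1 : stdAddChar ((d * r : ℕ) : ZMod q) ≠ 1 := by
              intro h1
              apply hne0
              apply ZMod.injective_toCircle (N := q)
              rw [ZMod.toCircle.map_zero_eq_one]
              ext
              rw [← ZMod.stdAddChar_apply, h1]
              rfl
            have hsin_pos : 0 < Real.sin (π * r / Q) := by
              have := sin_lower Q r hr1 hrQ
              have hrR : (0:ℝ) < r := by exact_mod_cast hr1
              have hrQR : (r:ℝ) < Q := by exact_mod_cast hrQ
              have hQR : (0:ℝ) < Q := by exact_mod_cast hQ0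
              have hmin : (0:ℝ) < min (r : ℝ) ((Q : ℝ) - r) := lt_min hrR (by linarith)
              calc (0:ℝ) < 2 * min (r : ℝ) ((Q : ℝ) - r) / Q := by positivity
                _ ≤ _ := this
            calc g ((d * r : ℕ) : ZMod q)
                ≤ 2 / Complex.abs (1 - stdAddChar ((d * r : ℕ) : ZMod q)) :=
                  geom_bound (psi_abs _) hne1 A L hL
              _ = 2 / (2 * |Real.sin (π * r / Q)|) := by
                  rw [hval, abs_one_sub_exp,
                    show ((2 * π * (r:ℝ) / (Q:ℝ)) / 2) = π * r / Q by ring]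
              _ = 1 / Real.sin (π * r / Q) := by
                  rw [abs_of_pos hsin_pos]
                  field_simp
          have hQq : Real.log Q ≤ Real.log q := by
            apply Real.log_le_log (by exact_mod_cast hQ0)
            exact_mod_cast Nat.div_le_self q d
          have hsum2 : ∑ r ∈ Finset.Ico 1 Q, g ((d * r : ℕ) : ZMod q) ≤ Q * (1 + Real.log q) := by
            calc ∑ r ∈ Finset.Ico 1 Q, g ((d * r : ℕ) : ZMod q)
                ≤ ∑ r ∈ Finset.Ico 1 Q, 1 / Real.sin (π * r / Q) := Finset.sum_le_sum hr
              _ ≤ Q * (1 + Real.log Q) := sum_inv_sin Q hQ0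
              _ ≤ Q * (1 + Real.log q) := by
                  have : (0:ℝ) ≤ Q := by positivity
                  nlinarith
          rw [hsplit, h0]
          have hdQq : (d : ℝ) * Q = q := by exact_mod_cast hqQ
          have hd0R : (0:ℝ) ≤ d := by positivity
          have hLR : (0:ℝ) ≤ L := by exact_mod_cast hL
          calc (d:ℝ) * ((L:ℝ) + ∑ r ∈ Finset.Ico 1 Q, g ((d * r : ℕ) : ZMod q))
              ≤ (d:ℝ) * ((L:ℝ) + Q * (1 + Real.log q)) := by gcongr
            _ = (d:ℝ) * L + ((d:ℝ) * Q) * (1 + Real.log q) := by ring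
            _ = (d : ℝ) * L + q * (1 + Real.log q) := by rw [hdQq]
  -- assemble
  have hsq : Real.sqrt q * Real.sqrt q = q := Real.mul_self_sqrt (by positivity)
  have hsqpos : 0 < Real.sqrt q := Real.sqrt_pos.mpr (by exact_mod_cast hq0)
  calc Complex.abs ((q:ℂ)⁻¹ * ∑ k : ZMod q, ∑ m ∈ Finset.Ioc A (A + L),
          (χ⁻¹ (-k) * τ * stdAddChar (k * (a : ZMod q))) * (stdAddChar (k * (d : ZMod q))) ^ m)
      ≤ (q:ℝ)⁻¹ * ∑ k : ZMod q, Real.sqrt q * g (k * (d : ZMod q)) := by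
        rw [map_mul, map_inv₀, Complex.abs_natCast]
        gcongr
        refine le_trans (Complex.abs.sum_le _ _) (Finset.sum_le_sum fun k _ => habs1 k)
    _ = (q:ℝ)⁻¹ * Real.sqrt q * ∑ k : ZMod q, g (k * (d : ZMod q)) := by
        rw [← Finset.mul_sum]; ring
    _ ≤ (q:ℝ)⁻¹ * Real.sqrt q * ((d : ℝ) * L + q * (1 + Real.log q)) := by
        have : (0:ℝ) ≤ (q:ℝ)⁻¹ * Real.sqrt q := by positivity
        exact mul_le_mul_of_nonneg_left key this
    _ = ((d : ℝ) * L + q * (1 + Real.log q)) / Real.sqrt q := by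
        rw [div_eq_mul_inv]
        have h9 : (q:ℝ)⁻¹ * Real.sqrt q = (Real.sqrt q)⁻¹ := by
          rw [← hsq]
          field_simp
          rw [Real.sqrt_sq hsqpos.le]
        rw [h9]; ring

end PVcore


theorem stmt_5 :
    ∃ C : ℝ, 0 < C ∧ ∀ (q : ℕ), 0 < q → ∀ (χ : DirichletCharacter ℂ q), χ.IsPrimitive →
      ∀ (M N a : ℤ), Int.gcd a q = 1 → 1 ≤ N →
        ‖∑ n ∈ (Finset.Ioc M (M + N)).filter (fun n => Int.gcd n q = 1),
            χ ((n + a : ℤ) : ZMod q)‖ ≤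
          C * (q.divisors.card : ℝ) * (Real.sqrt q * Real.log q + (N : ℝ) / Real.sqrt q) := by
  refine ⟨4, by norm_num, ?_⟩
  intro q hq χ hχ M N a ha hN
  haveI : NeZero q := ⟨hq.ne'⟩
  have hN0 : (0:ℝ) ≤ N := by exact_mod_cast (by linarith : (0:ℤ) ≤ N)
  by_cases hq1 : q = 1
  · subst hq1
    have hfil : (Finset.Ioc M (M+N)).filter (fun n => Int.gcd n ((1:ℕ):ℤ) = 1)
        = Finset.Ioc M (M+N) := by
      apply Finset.filter_true_of_mem; intro n _; simp [Int.gcd]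
    rw [hfil]
    have hone : ∀ n ∈ Finset.Ioc M (M+N), χ ((n + a : ℤ) : ZMod 1) = 1 := by
      intro n _
      have h1 : ((n + a : ℤ) : ZMod 1) = 1 := Subsingleton.elim _ _
      rw [h1, map_one]
    rw [Finset.sum_congr rfl hone, Finset.sum_const, Int.card_Ioc]
    simp only [nsmul_eq_mul, mul_one, Complex.norm_natCast]
    have h1 : (((M + N - M).toNat : ℕ) : ℝ) = (N:ℝ) := by
      rw [show M + N - M = N by ring]; exact_mod_cast Int.toNat_of_nonneg (by linarith)
    rw [h1]
    simp only [Nat.divisors_one, Finset.card_singleton, Nat.cast_one,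
      Real.sqrt_one, Real.log_one]
    norm_num
    linarith
  have hq2 : 2 ≤ q := by omega
  have hqR : (0:ℝ) < q := by exact_mod_cast hq
  have hsqpos : 0 < Real.sqrt q := Real.sqrt_pos.mpr hqR
  -- Möbius identity
  have hmob : ∀ n : ℤ, (if Int.gcd n q = 1 then (1:ℂ) else 0)
      = ∑ d ∈ q.divisors, (if ((d:ℕ):ℤ) ∣ n then ((ArithmeticFunction.moebius d : ℤ) : ℂ) else 0) := by
    intro n
    have hg0 : Int.gcd n q ≠ 0 := by
      intro h
      rw [Int.gcd] at h
      have := Nat.eq_zero_of_gcd_eq_zero_right h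
      simp at this
      omega
    have hset : (Int.gcd n q).divisors = q.divisors.filter (fun d => ((d:ℕ):ℤ) ∣ n) := by
      ext e
      simp only [Nat.mem_divisors, Finset.mem_filter]
      rw [Int.gcd, show ((q:ℤ)).natAbs = q from Int.natAbs_natCast q, Nat.dvd_gcd_iff,
        ← Int.natCast_dvd]
      constructor
      · rintro ⟨⟨h1, h2⟩, _⟩; exact ⟨⟨h2, hq.ne'⟩, h1⟩
      · rintro ⟨⟨h2, _⟩, h1⟩
        refine ⟨⟨h1, h2⟩, ?_⟩
        rwa [Int.gcd, show ((q:ℤ)).natAbs = q from Int.natAbs_natCast q] at hg0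
    have hmu : (∑ d ∈ (Int.gcd n q).divisors, ArithmeticFunction.moebius d : ℤ)
        = if Int.gcd n q = 1 then 1 else 0 := by
      have h : (ArithmeticFunction.moebius * ↑ArithmeticFunction.zeta) (Int.gcd n q)
          = (1 : ArithmeticFunction ℤ) (Int.gcd n q) := by
        rw [ArithmeticFunction.moebius_mul_coe_zeta]
      rw [ArithmeticFunction.coe_mul_zeta_apply] at h
      rw [h, ArithmeticFunction.one_apply]
    calc (if Int.gcd n q = 1 then (1:ℂ) else 0)
        = (((if Int.gcd n q = 1 then 1 else 0) : ℤ) : ℂ) := by split_ifs <;> simp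
      _ = ((∑ d ∈ (Int.gcd n q).divisors, ArithmeticFunction.moebius d : ℤ) : ℂ) := by rw [hmu]
      _ = ∑ d ∈ (Int.gcd n q).divisors, ((ArithmeticFunction.moebius d : ℤ) : ℂ) := by
          push_cast; rfl
      _ = ∑ d ∈ q.divisors.filter (fun d => ((d:ℕ):ℤ) ∣ n),
            ((ArithmeticFunction.moebius d : ℤ):ℂ) := by rw [hset]
      _ = _ := Finset.sum_filter _ _
  -- decompose the sum
  have hdecomp : ∑ n ∈ (Finset.Ioc M (M + N)).filter (fun n => Int.gcd n q = 1),
      χ ((n + a : ℤ) : ZMod q)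
      = ∑ d ∈ q.divisors, ((ArithmeticFunction.moebius d : ℤ) : ℂ) *
          ∑ n ∈ (Finset.Ioc M (M + N)).filter (fun n => ((d:ℕ):ℤ) ∣ n),
            χ ((n + a : ℤ) : ZMod q) := by
    rw [Finset.sum_filter]
    calc ∑ n ∈ Finset.Ioc M (M+N), (if Int.gcd n q = 1 then χ ((n + a : ℤ) : ZMod q) else 0)
        = ∑ n ∈ Finset.Ioc M (M+N), (if Int.gcd n q = 1 then (1:ℂ) else 0)
            * χ ((n + a : ℤ) : ZMod q) := by
          refine Finset.sum_congr rfl fun n _ => ?_; split_ifs <;> simp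
      _ = ∑ n ∈ Finset.Ioc M (M+N), ∑ d ∈ q.divisors,
            (if ((d:ℕ):ℤ) ∣ n then ((ArithmeticFunction.moebius d : ℤ) : ℂ) else 0)
            * χ ((n + a : ℤ) : ZMod q) := by
          refine Finset.sum_congr rfl fun n _ => ?_
          rw [hmob n, Finset.sum_mul]
      _ = ∑ d ∈ q.divisors, ∑ n ∈ Finset.Ioc M (M+N),
            (if ((d:ℕ):ℤ) ∣ n then ((ArithmeticFunction.moebius d : ℤ) : ℂ)
              * χ ((n + a : ℤ) : ZMod q) else 0) := by
          rw [Finset.sum_comm]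
          refine Finset.sum_congr rfl fun n _ => Finset.sum_congr rfl fun d _ => ?_
          split_ifs <;> simp
      _ = _ := by
          refine Finset.sum_congr rfl fun d _ => ?_
          rw [← Finset.sum_filter, Finset.mul_sum]
  rw [hdecomp]
  -- bound each term
  have hterm : ∀ d ∈ q.divisors,
      Complex.abs (((ArithmeticFunction.moebius d : ℤ) : ℂ) *
        ∑ n ∈ (Finset.Ioc M (M + N)).filter (fun n => ((d:ℕ):ℤ) ∣ n),
          χ ((n + a : ℤ) : ZMod q))
      ≤ ((N:ℝ) + q * (2 + Real.log q)) / Real.sqrt q := by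
    intro d hdmem
    rw [Nat.mem_divisors] at hdmem
    obtain ⟨hd, _⟩ := hdmem
    have hd0 : 0 < d := Nat.pos_of_dvd_of_pos hd hq
    have hdZ : (0:ℤ) < (d:ℤ) := by exact_mod_cast hd0
    set A := M / (d:ℤ) with hA
    set B := (M + N) / (d:ℤ) with hB
    set L := B - A with hLdef
    have hL : 0 ≤ L := by
      have := Int.ediv_le_ediv hdZ (by linarith : M ≤ M + N)
      omega
    -- reindex
    have hreindex : ∑ n ∈ (Finset.Ioc M (M + N)).filter (fun n => ((d:ℕ):ℤ) ∣ n),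
        χ ((n + a : ℤ) : ZMod q) = ∑ m ∈ Finset.Ioc A (A + L), χ ((d * m + a : ℤ) : ZMod q) := by
      have hAB : A + L = B := by omega
      rw [hAB]
      refine Finset.sum_nbij' (fun n => n / (d:ℤ)) (fun m => (d:ℤ) * m) ?_ ?_ ?_ ?_ ?_
      · intro n hn
        simp only [Finset.mem_filter, Finset.mem_Ioc] at hn
        obtain ⟨⟨hn1, hn2⟩, hn3⟩ := hn
        simp only [Finset.mem_Ioc]
        constructor
        · rw [hA, Int.ediv_lt_iff_lt_mul hdZ, Int.ediv_mul_cancel hn3]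
          exact hn1
        · exact Int.ediv_le_ediv hdZ hn2
      · intro m hm
        simp only [Finset.mem_Ioc] at hm
        obtain ⟨hm1, hm2⟩ := hm
        simp only [Finset.mem_filter, Finset.mem_Ioc]
        refine ⟨⟨?_, ?_⟩, Dvd.intro m rfl⟩
        · have := (Int.ediv_lt_iff_lt_mul hdZ).mp (lt_of_le_of_lt (le_refl A) hm1)
          linarith [this]
        · have := (Int.le_ediv_iff_mul_le hdZ).mp hm2
          linarith [this]
      · intro n hn
        simp only [Finset.mem_filter] at hn
        exact Int.mul_ediv_cancel' hn.2
      · intro m _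
        exact Int.mul_ediv_cancel_left m hdZ.ne'
      · intro n hn
        simp only [Finset.mem_filter] at hn
        rw [Int.mul_ediv_cancel' hn.2]
    rw [hreindex, map_mul]
    have hmu1 : Complex.abs ((ArithmeticFunction.moebius d : ℤ) : ℂ) ≤ 1 := by
      rw [Complex.abs_intCast]
      exact_mod_cast ArithmeticFunction.abs_moebius_le_one
    have hcore := core_bound hχ d hd hd0 a A L hL
    have hdL : (d:ℝ) * L ≤ N + d := by
      have h1 : (d:ℤ) * B ≤ M + N := by
        have := Int.ediv_mul_le (M + N) hdZ.ne'
        rw [hB]; linarith [this]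
      have h2 : M < (A + 1) * (d:ℤ) := by
        refine (Int.ediv_lt_iff_lt_mul hdZ).mp ?_
        rw [← hA]
        exact lt_add_one A
      have : (d:ℤ) * L ≤ N + d := by
        rw [hLdef]
        nlinarith [h1, h2]
      exact_mod_cast this
    have hdq : (d:ℝ) ≤ q := by exact_mod_cast Nat.le_of_dvd hq hd
    calc Complex.abs ((ArithmeticFunction.moebius d : ℤ) : ℂ)
          * Complex.abs (∑ m ∈ Finset.Ioc A (A + L), χ ((d * m + a : ℤ) : ZMod q))
        ≤ 1 * (((d : ℝ) * L + q * (1 + Real.log q)) / Real.sqrt q) := by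
          refine mul_le_mul hmu1 hcore (Complex.abs.nonneg _) zero_le_one
      _ = ((d : ℝ) * L + q * (1 + Real.log q)) / Real.sqrt q := one_mul _
      _ ≤ ((N:ℝ) + q * (2 + Real.log q)) / Real.sqrt q := by
          refine (div_le_div_iff_of_pos_right hsqpos).mpr ?_
          linarith [hdL, hdq]
  -- final assembly
  have hlog2 : (2:ℝ)/3 ≤ Real.log q := by
    have h1 : Real.log 2 ≤ Real.log q := by
      apply Real.log_le_log (by norm_num)
      exact_mod_cast hq2
    have := Real.log_two_gt_d9
    linarith
  have hlogpos : 0 < Real.log q := by linarith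
  calc Complex.abs (∑ d ∈ q.divisors, ((ArithmeticFunction.moebius d : ℤ) : ℂ) *
          ∑ n ∈ (Finset.Ioc M (M + N)).filter (fun n => ((d:ℕ):ℤ) ∣ n),
            χ ((n + a : ℤ) : ZMod q))
      ≤ ∑ d ∈ q.divisors, Complex.abs (((ArithmeticFunction.moebius d : ℤ) : ℂ) *
          ∑ n ∈ (Finset.Ioc M (M + N)).filter (fun n => ((d:ℕ):ℤ) ∣ n),
            χ ((n + a : ℤ) : ZMod q)) := Complex.abs.sum_le _ _
    _ ≤ ∑ d ∈ q.divisors, ((N:ℝ) + q * (2 + Real.log q)) / Real.sqrt q :=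
        Finset.sum_le_sum hterm
    _ = (q.divisors.card : ℝ) * (((N:ℝ) + q * (2 + Real.log q)) / Real.sqrt q) := by
        rw [Finset.sum_const, nsmul_eq_mul]
    _ ≤ 4 * (q.divisors.card : ℝ) * (Real.sqrt q * Real.log q + (N : ℝ) / Real.sqrt q) := by
        have hcard : (0:ℝ) ≤ (q.divisors.card : ℝ) := by positivity
        have hkey : ((N:ℝ) + q * (2 + Real.log q)) / Real.sqrt q
            ≤ 4 * (Real.sqrt q * Real.log q + (N : ℝ) / Real.sqrt q) := by
          rw [div_le_iff₀ hsqpos]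
          have hsq : Real.sqrt q * Real.sqrt q = q := Real.mul_self_sqrt hqR.le
          have e1 : (4 * (Real.sqrt q * Real.log q + (N : ℝ) / Real.sqrt q)) * Real.sqrt q
              = 4 * q * Real.log q + 4 * N := by
            field_simp
            ring_nf
            nlinarith [hsq]
          rw [e1]
          nlinarith [hlog2, hqR, hN0]
        nlinarith [hkey, hcard]
end

section
/- Let $q$ be a positive integer, $V \ge 1$, and for each quadruple $(v_1,v_2,v_3,v_4)$ with $1 \le v_i \le V$ containing at least three distinct values, let $A'_i = \prod_{j \ne i}(v_i - v_j)$. Then for every $\varepsilon > 0$ there is $C(\varepsilon)$ with $\sum' \sum_{\substack{1 \le i \le 4 \\ A'_i \ne 0}} \gcd(A'_i, q) \le C(\varepsilon) V^4 q^{\varepsilon}$, where $\sum'$ runs over all such restricted quadruples. -/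
open Finset


lemma tau_bound (ε : ℝ) (hε : 0 < ε) : ∃ C : ℝ, 1 ≤ C ∧ ∀ n : ℕ, 0 < n →
    (n.divisors.card : ℝ) ≤ C * (n : ℝ) ^ ε := by
  have h2ε : 1 < (2:ℝ) ^ ε := Real.one_lt_rpow_iff_of_pos (by norm_num) |>.2 (Or.inl ⟨by norm_num, hε⟩)
  set δ : ℝ := (2:ℝ) ^ ε - 1 with hδdef
  have hδ : 0 < δ := by simp only [hδdef]; linarith
  set K : ℝ := max 1 (1/δ) with hKdef
  have hK1 : 1 ≤ K := le_max_left _ _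
  have hKδ : 1 ≤ K * δ := by
    calc (1:ℝ) = (1/δ) * δ := by field_simp
    _ ≤ K * δ := by gcongr; exact le_max_right _ _
  set T : ℕ := ⌈(2:ℝ) ^ (1/ε)⌉₊ + 1 with hTdef
  refine ⟨K ^ T, one_le_pow₀ hK1, ?_⟩
  intro n hn
  have key : ∀ p ∈ n.primeFactors, ((n.factorization p + 1 : ℕ) : ℝ) ≤
      (if (p:ℝ) < (2:ℝ) ^ (1/ε) then K else 1) * ((p : ℝ) ^ (n.factorization p)) ^ ε := by
    intro p hp
    have hpp : p.Prime := Nat.prime_of_mem_primeFactors hp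
    have hp2 : (2:ℝ) ≤ (p:ℝ) := by exact_mod_cast hpp.two_le
    set a : ℕ := n.factorization p
    have hbase : ((p : ℝ) ^ a) ^ ε = ((p : ℝ) ^ ε) ^ a := by
      rw [← Real.rpow_natCast (p:ℝ) a, ← Real.rpow_mul (by positivity), mul_comm,
        Real.rpow_mul (by positivity), Real.rpow_natCast]
    rw [hbase]
    split_ifs with hsmall
    · have h1 : ((2:ℝ) ^ ε) ^ a ≤ ((p:ℝ) ^ ε) ^ a :=
        pow_le_pow_left₀ (by positivity) (Real.rpow_le_rpow (by norm_num) hp2 hε.le) a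
      have h2 : 1 + (a:ℝ) * δ ≤ ((2:ℝ) ^ ε) ^ a := by
        have := one_add_mul_le_pow (a := δ) (by linarith) a
        simpa [hδdef] using this
      push_cast
      have ha0 : (0:ℝ) ≤ a := by positivity
      have hK0 : (0:ℝ) ≤ K := by linarith
      nlinarith [mul_le_mul_of_nonneg_left h1 hK0, mul_le_mul_of_nonneg_left h2 hK0]
    · push_neg at hsmall
      have hpε : (2:ℝ) ≤ (p:ℝ) ^ ε := by
        calc (2:ℝ) = ((2:ℝ) ^ (1/ε)) ^ ε := by
              rw [← Real.rpow_mul (by norm_num), one_div, inv_mul_cancel₀ hε.ne', Real.rpow_one]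
        _ ≤ (p:ℝ) ^ ε := Real.rpow_le_rpow (by positivity) hsmall hε.le
      have h1 : ((a + 1 : ℕ) : ℝ) ≤ (2:ℝ) ^ a := by
        exact_mod_cast Nat.cast_le.mpr (Nat.succ_le_of_lt (Nat.lt_two_pow_self (n := a)))
      rw [one_mul]
      exact h1.trans (pow_le_pow_left₀ (by norm_num) hpε a)
  -- card divisors as product
  have hcard : (n.divisors.card : ℝ) = ∏ p ∈ n.primeFactors, ((n.factorization p + 1 : ℕ) : ℝ) := by
    rw [Nat.card_divisors hn.ne']
    show ((∏ p ∈ n.factorization.support, (n.factorization p + 1) : ℕ) : ℝ) = _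
    rw [Nat.support_factorization]
    push_cast
    rfl
  have hrn : (n : ℝ) ^ ε = ∏ p ∈ n.primeFactors, ((p : ℝ) ^ (n.factorization p)) ^ ε := by
    conv_lhs => rw [← Nat.factorization_prod_pow_eq_self hn.ne']
    show ((∏ p ∈ n.factorization.support, p ^ n.factorization p : ℕ) : ℝ) ^ ε = _
    rw [Nat.support_factorization]
    push_cast
    rw [← Real.finset_prod_rpow _ _ (fun p _ => by positivity)]
  calc (n.divisors.card : ℝ) ≤ ∏ p ∈ n.primeFactors,
        ((if (p:ℝ) < (2:ℝ) ^ (1/ε) then K else 1) * ((p : ℝ) ^ (n.factorization p)) ^ ε) := by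
        rw [hcard]; exact Finset.prod_le_prod (fun p _ => by positivity) key
    _ = (∏ p ∈ n.primeFactors, (if (p:ℝ) < (2:ℝ) ^ (1/ε) then K else 1)) * (n:ℝ) ^ ε := by
        rw [Finset.prod_mul_distrib, hrn]
    _ ≤ K ^ T * (n:ℝ) ^ ε := by
        apply mul_le_mul_of_nonneg_right ?_ (by positivity)
        calc (∏ p ∈ n.primeFactors, (if (p:ℝ) < (2:ℝ) ^ (1/ε) then K else 1))
            = ∏ p ∈ n.primeFactors.filter (fun p : ℕ => (p:ℝ) < (2:ℝ) ^ (1/ε)), K := by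
              rw [Finset.prod_filter]
          _ = K ^ (n.primeFactors.filter (fun p : ℕ => (p:ℝ) < (2:ℝ) ^ (1/ε))).card :=
              Finset.prod_const K
          _ ≤ K ^ T := by
              apply pow_le_pow_right₀ hK1
              have hsub : n.primeFactors.filter (fun p : ℕ => (p:ℝ) < (2:ℝ) ^ (1/ε)) ⊆
                  Finset.range T := by
                intro p hp
                simp only [Finset.mem_filter] at hp
                rw [Finset.mem_range, hTdef]
                have : (p:ℝ) ≤ ⌈(2:ℝ) ^ (1/ε)⌉₊ := le_trans hp.2.le (Nat.le_ceil _)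
                exact_mod_cast Nat.lt_succ_of_le (by exact_mod_cast this)
              calc _ ≤ (Finset.range T).card := Finset.card_le_card hsub
                _ = T := Finset.card_range T


def gg (q a b : ℕ) : ℕ := if a = b then 0 else Int.gcd ((a : ℤ) - (b : ℤ)) q

lemma gg_comm (q a b : ℕ) : gg q a b = gg q b a := by
  unfold gg
  rcases eq_or_ne a b with h | h
  · simp [h]
  · rw [if_neg h, if_neg (Ne.symm h)]
    unfold Int.gcd
    have h2 : ((a:ℤ) - b).natAbs = ((b:ℤ) - a).natAbs := by omega
    rw [h2]

lemma gcd_prod_dvd (q : ℕ) {ι : Type*} (s : Finset ι) (f : ι → ℤ) :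
    Int.gcd (∏ j ∈ s, f j) q ∣ ∏ j ∈ s, Int.gcd (f j) q := by
  classical
  induction s using Finset.induction_on with
  | empty => simp
  | insert a s' h ih =>
    rw [Finset.prod_insert h, Finset.prod_insert h]
    have h1 : Int.gcd (f a * ∏ j ∈ s', f j) q ∣ Int.gcd (f a) q * Int.gcd (∏ j ∈ s', f j) q := by
      show (((f a) * ∏ j ∈ s', f j).natAbs.gcd (q:ℤ).natAbs) ∣ _
      rw [Int.natAbs_mul]
      simp only [Int.natAbs_natCast]
      show Nat.gcd _ _ ∣ Nat.gcd (f a).natAbs q * Nat.gcd (∏ j ∈ s', f j).natAbs q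
      rw [Nat.gcd_comm _ q, Nat.gcd_comm (f a).natAbs q, Nat.gcd_comm (∏ j ∈ s', f j).natAbs q,
        ← gcd_eq_nat_gcd, ← gcd_eq_nat_gcd, ← gcd_eq_nat_gcd]
      exact gcd_mul_dvd_mul_gcd _ _ _
    exact h1.trans (mul_dvd_mul_left _ ih)

lemma sumgcd (q V : ℕ) (hq : 0 < q) :
    ∑ m ∈ Icc 1 V, Nat.gcd m q ≤ V * q.divisors.card := by
  have hIcc : Icc 1 V = Ioc 0 V := rfl
  rw [hIcc]
  have hmaps : ∀ m ∈ Ioc 0 V, Nat.gcd m q ∈ q.divisors :=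
    fun m _ => Nat.mem_divisors.mpr ⟨Nat.gcd_dvd_right m q, hq.ne'⟩
  rw [← Finset.sum_fiberwise_of_maps_to hmaps]
  calc ∑ d ∈ q.divisors, ∑ m ∈ (Ioc 0 V).filter (fun m => Nat.gcd m q = d), Nat.gcd m q
      ≤ ∑ d ∈ q.divisors, V := by
        apply Finset.sum_le_sum
        intro d _
        calc ∑ m ∈ (Ioc 0 V).filter (fun m => Nat.gcd m q = d), Nat.gcd m q
            = ∑ m ∈ (Ioc 0 V).filter (fun m => Nat.gcd m q = d), d := by
              apply Finset.sum_congr rfl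
              intro m hm
              exact (Finset.mem_filter.mp hm).2
          _ = ((Ioc 0 V).filter (fun m => Nat.gcd m q = d)).card * d := by
              rw [Finset.sum_const, smul_eq_mul]
          _ ≤ ((Ioc 0 V).filter (fun m => d ∣ m)).card * d := by
              apply Nat.mul_le_mul_right
              apply Finset.card_le_card
              intro m hm
              rw [Finset.mem_filter] at *
              exact ⟨hm.1, hm.2 ▸ Nat.gcd_dvd_left m q⟩
          _ = V / d * d := by rw [Nat.Ioc_filter_dvd_card_eq_div]
          _ ≤ V := Nat.div_mul_le_self V d
    _ = q.divisors.card * V := by rw [Finset.sum_const, smul_eq_mul]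
    _ = V * q.divisors.card := Nat.mul_comm _ _

lemma sumg (q V v : ℕ) (hq : 0 < q) (hv : v ∈ Icc 1 V) :
    ∑ n ∈ Icc 1 V, gg q v n ≤ 2 * (V * q.divisors.card) := by
  rw [Finset.mem_Icc] at hv
  rw [← Finset.sum_filter_add_sum_filter_not (Icc 1 V) (· < v)]
  have hlow : ∑ n ∈ (Icc 1 V).filter (· < v), gg q v n ≤ V * q.divisors.card := by
    have he : ∀ n ∈ (Icc 1 V).filter (· < v), gg q v n = Nat.gcd (v - n) q := by
      intro n hn
      rw [Finset.mem_filter, Finset.mem_Icc] at hn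
      have h1 : v ≠ n := by omega
      rw [gg, if_neg h1]
      have : (v : ℤ) - n = ((v - n : ℕ) : ℤ) := by
        have := hn.2; push_cast [Nat.cast_sub (le_of_lt hn.2)]; ring
      rw [this, Int.gcd_natCast_natCast]
    rw [Finset.sum_congr rfl he]
    have hinj : Set.InjOn (fun n => v - n) ((Icc 1 V).filter (· < v)) := by
      intro x hx y hy hxy
      simp only [Finset.coe_filter, Set.mem_setOf_eq, Finset.mem_Icc] at hx hy
      simp only at hxy
      omega
    calc ∑ n ∈ (Icc 1 V).filter (· < v), Nat.gcd (v - n) q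
        = ∑ m ∈ ((Icc 1 V).filter (· < v)).image (fun n => v - n), Nat.gcd m q :=
          (Finset.sum_image (f := fun m => Nat.gcd m q) (fun x hx y hy => hinj hx hy)).symm
      _ ≤ ∑ m ∈ Icc 1 V, Nat.gcd m q := by
          apply Finset.sum_le_sum_of_subset
          intro m hm
          rw [Finset.mem_image] at hm
          obtain ⟨n, hn, rfl⟩ := hm
          rw [Finset.mem_filter, Finset.mem_Icc] at hn
          rw [Finset.mem_Icc]
          omega
      _ ≤ V * q.divisors.card := sumgcd q V hq
  have hhigh : ∑ n ∈ (Icc 1 V).filter (fun n => ¬ n < v), gg q v n ≤ V * q.divisors.card := by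
    have hsub : ∑ n ∈ (Icc 1 V).filter (fun n => ¬ n < v), gg q v n
        = ∑ n ∈ (Icc 1 V).filter (fun n => v < n), gg q v n := by
      symm
      apply Finset.sum_subset
      · intro n hn
        rw [Finset.mem_filter] at hn ⊢
        refine ⟨hn.1, ?_⟩
        have := hn.2
        omega
      · intro n hn hn'
        rw [Finset.mem_filter] at hn hn'
        have hnv : n = v := by
          rcases Nat.lt_trichotomy n v with h | h | h
          · exact absurd h hn.2
          · exact h
          · exact absurd ⟨hn.1, h⟩ hn'
        rw [gg, if_pos hnv.symm]
    rw [hsub]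
    have he : ∀ n ∈ (Icc 1 V).filter (fun n => v < n), gg q v n = Nat.gcd (n - v) q := by
      intro n hn
      rw [Finset.mem_filter, Finset.mem_Icc] at hn
      have h1 : v ≠ n := by omega
      rw [gg, if_neg h1]
      have : (v : ℤ) - n = -(((n - v : ℕ) : ℤ)) := by
        push_cast [Nat.cast_sub (le_of_lt hn.2)]; ring
      rw [this, Int.neg_gcd, Int.gcd_natCast_natCast]
    rw [Finset.sum_congr rfl he]
    have hinj : Set.InjOn (fun n => n - v) ((Icc 1 V).filter (fun n => v < n)) := by
      intro x hx y hy hxy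
      simp only [Finset.coe_filter, Set.mem_setOf_eq, Finset.mem_Icc] at hx hy
      simp only at hxy
      omega
    calc ∑ n ∈ (Icc 1 V).filter (fun n => v < n), Nat.gcd (n - v) q
        = ∑ m ∈ ((Icc 1 V).filter (fun n => v < n)).image (fun n => n - v), Nat.gcd m q :=
          (Finset.sum_image (f := fun m => Nat.gcd m q) (fun x hx y hy => hinj hx hy)).symm
      _ ≤ ∑ m ∈ Icc 1 V, Nat.gcd m q := by
          apply Finset.sum_le_sum_of_subset
          intro m hm
          rw [Finset.mem_image] at hm
          obtain ⟨n, hn, rfl⟩ := hm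
          rw [Finset.mem_filter, Finset.mem_Icc] at hn
          rw [Finset.mem_Icc]
          omega
      _ ≤ V * q.divisors.card := sumgcd q V hq
  omega


lemma sum3_factor (I : Finset ℕ) (g : ℕ → ℕ) :
    ∑ b ∈ I, ∑ c ∈ I, ∑ d ∈ I, g b * g c * g d = (∑ n ∈ I, g n) * (∑ n ∈ I, g n) * (∑ n ∈ I, g n) := by
  rw [Finset.sum_mul_sum, Finset.sum_mul_sum]
  simp only [Finset.mul_sum, Finset.sum_mul, mul_assoc]
  exact Finset.sum_congr rfl fun _ _ => Finset.sum_congr rfl fun _ _ =>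
    Finset.sum_congr rfl fun _ _ => by ring

lemma sum4_rot {M : Type*} [AddCommMonoid M] (s : Finset ℕ) (f : ℕ → ℕ → ℕ → ℕ → M) :
    ∑ a ∈ s, ∑ b ∈ s, ∑ c ∈ s, ∑ d ∈ s, f a b c d
      = ∑ b ∈ s, ∑ c ∈ s, ∑ d ∈ s, ∑ a ∈ s, f a b c d := by
  rw [Finset.sum_comm]
  refine Finset.sum_congr rfl fun b _ => ?_
  rw [Finset.sum_comm]
  refine Finset.sum_congr rfl fun c _ => ?_
  rw [Finset.sum_comm]

lemma core (V B : ℕ) (g : ℕ → ℕ → ℕ) (hB : ∀ v ∈ Icc 1 V, ∑ n ∈ Icc 1 V, g v n ≤ B) :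
    ∑ a ∈ Icc 1 V, ∑ b ∈ Icc 1 V, ∑ c ∈ Icc 1 V, ∑ d ∈ Icc 1 V,
      g a b * g a c * g a d ≤ V * B ^ 3 := by
  calc ∑ a ∈ Icc 1 V, ∑ b ∈ Icc 1 V, ∑ c ∈ Icc 1 V, ∑ d ∈ Icc 1 V, g a b * g a c * g a d
      ≤ ∑ a ∈ Icc 1 V, B ^ 3 := by
        apply Finset.sum_le_sum
        intro a ha
        rw [sum3_factor]
        calc (∑ n ∈ Icc 1 V, g a n) * (∑ n ∈ Icc 1 V, g a n) * (∑ n ∈ Icc 1 V, g a n)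
            ≤ B * B * B := Nat.mul_le_mul (Nat.mul_le_mul (hB a ha) (hB a ha)) (hB a ha)
          _ = B ^ 3 := by ring
    _ = (Icc 1 V).card * B ^ 3 := by rw [Finset.sum_const, smul_eq_mul]
    _ ≤ V * B ^ 3 := by
        apply Nat.mul_le_mul_right
        rw [Nat.card_Icc]
        omega

-- quad: the full 4-term bound
lemma quad (q V B : ℕ) (g : ℕ → ℕ → ℕ) (hB : ∀ v ∈ Icc 1 V, ∑ n ∈ Icc 1 V, g v n ≤ B) :
    ∑ a ∈ Icc 1 V, ∑ b ∈ Icc 1 V, ∑ c ∈ Icc 1 V, ∑ d ∈ Icc 1 V,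
      (g a b * g a c * g a d + g b a * g b c * g b d
        + g c a * g c b * g c d + g d a * g d b * g d c) ≤ 4 * (V * B ^ 3) := by
  simp only [Finset.sum_add_distrib]
  have h1 := core V B g hB
  have h2 : ∑ a ∈ Icc 1 V, ∑ b ∈ Icc 1 V, ∑ c ∈ Icc 1 V, ∑ d ∈ Icc 1 V,
      g b a * g b c * g b d ≤ V * B ^ 3 := by
    rw [Finset.sum_comm]
    exact core V B g hB
  have h3 : ∑ a ∈ Icc 1 V, ∑ b ∈ Icc 1 V, ∑ c ∈ Icc 1 V, ∑ d ∈ Icc 1 V,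
      g c a * g c b * g c d ≤ V * B ^ 3 := by
    rw [sum4_rot (Icc 1 V) (fun a b c d => g c a * g c b * g c d),
      sum4_rot (Icc 1 V) (fun b c d a => g c a * g c b * g c d)]
    refine le_trans (le_of_eq ?_) (core V B g hB)
    exact Finset.sum_congr rfl fun _ _ => Finset.sum_congr rfl fun _ _ =>
      Finset.sum_congr rfl fun _ _ => Finset.sum_congr rfl fun _ _ => by ring
  have h4 : ∑ a ∈ Icc 1 V, ∑ b ∈ Icc 1 V, ∑ c ∈ Icc 1 V, ∑ d ∈ Icc 1 V,
      g d a * g d b * g d c ≤ V * B ^ 3 := by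
    rw [sum4_rot (Icc 1 V) (fun a b c d => g d a * g d b * g d c),
      sum4_rot (Icc 1 V) (fun b c d a => g d a * g d b * g d c),
      sum4_rot (Icc 1 V) (fun c d a b => g d a * g d b * g d c)]
    exact core V B g hB
  omega

lemma pointwise (q : ℕ) (hq : 0 < q) (v₁ v₂ v₃ v₄ : ℕ) :
    (∑ i ∈ Finset.univ.filter (fun i : Fin 4 =>
        (∏ j ∈ Finset.univ.filter (fun j : Fin 4 => j ≠ i),
          ((![v₁, v₂, v₃, v₄] i : ℤ) - (![v₁, v₂, v₃, v₄] j : ℤ))) ≠ 0),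
      Int.gcd (∏ j ∈ Finset.univ.filter (fun j : Fin 4 => j ≠ i),
          ((![v₁, v₂, v₃, v₄] i : ℤ) - (![v₁, v₂, v₃, v₄] j : ℤ))) q)
    ≤ gg q v₁ v₂ * gg q v₁ v₃ * gg q v₁ v₄ + gg q v₂ v₁ * gg q v₂ v₃ * gg q v₂ v₄
      + gg q v₃ v₁ * gg q v₃ v₂ * gg q v₃ v₄ + gg q v₄ v₁ * gg q v₄ v₂ * gg q v₄ v₃ := by
  set N : Fin 4 → ℕ := ![v₁, v₂, v₃, v₄] with hN
  have step1 : (∑ i ∈ Finset.univ.filter (fun i : Fin 4 =>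
        (∏ j ∈ Finset.univ.filter (fun j : Fin 4 => j ≠ i), ((N i : ℤ) - (N j : ℤ))) ≠ 0),
      Int.gcd (∏ j ∈ Finset.univ.filter (fun j : Fin 4 => j ≠ i), ((N i : ℤ) - (N j : ℤ))) q)
      ≤ ∑ i : Fin 4, ∏ j ∈ Finset.univ.filter (fun j : Fin 4 => j ≠ i), gg q (N i) (N j) := by
    refine le_trans (Finset.sum_le_sum ?_) (Finset.sum_le_sum_of_subset (Finset.filter_subset _ _))
    intro i hi
    have hPi : (∏ j ∈ Finset.univ.filter (fun j : Fin 4 => j ≠ i), ((N i : ℤ) - (N j : ℤ))) ≠ 0 :=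
      (Finset.mem_filter.mp hi).2
    have hpos : 0 < ∏ j ∈ Finset.univ.filter (fun j : Fin 4 => j ≠ i), Int.gcd ((N i : ℤ) - (N j : ℤ)) q := by
      apply Finset.prod_pos
      intro j hj
      apply Nat.pos_of_ne_zero
      intro h0
      exact hq.ne' (by exact_mod_cast (Int.gcd_eq_zero_iff.mp h0).2)
    calc Int.gcd (∏ j ∈ Finset.univ.filter (fun j : Fin 4 => j ≠ i), ((N i : ℤ) - (N j : ℤ))) q
        ≤ ∏ j ∈ Finset.univ.filter (fun j : Fin 4 => j ≠ i), Int.gcd ((N i : ℤ) - (N j : ℤ)) q :=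
          Nat.le_of_dvd hpos (gcd_prod_dvd q _ _)
      _ = ∏ j ∈ Finset.univ.filter (fun j : Fin 4 => j ≠ i), gg q (N i) (N j) := by
          apply Finset.prod_congr rfl
          intro j hj
          have hne : (N i : ℤ) - (N j : ℤ) ≠ 0 := Finset.prod_ne_zero_iff.mp hPi j hj
          have hNe : N i ≠ N j := by
            intro h
            apply hne
            rw [h]
            ring
          rw [gg, if_neg hNe]
  refine le_trans step1 (le_of_eq ?_)
  have f0 : (Finset.univ.filter (fun j : Fin 4 => j ≠ 0)) = {1, 2, 3} := by decide
  have f1 : (Finset.univ.filter (fun j : Fin 4 => j ≠ 1)) = {0, 2, 3} := by decide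
  have f2 : (Finset.univ.filter (fun j : Fin 4 => j ≠ 2)) = {0, 1, 3} := by decide
  have f3 : (Finset.univ.filter (fun j : Fin 4 => j ≠ 3)) = {0, 1, 2} := by decide
  rw [Fin.sum_univ_four, f0, f1, f2, f3]
  have e0 : N 0 = v₁ := rfl
  have e1 : N 1 = v₂ := rfl
  have e2 : N 2 = v₃ := rfl
  have e3 : N 3 = v₄ := rfl
  have p0 : ∏ x ∈ ({1, 2, 3} : Finset (Fin 4)), gg q v₁ (N x)
      = gg q v₁ v₂ * (gg q v₁ v₃ * gg q v₁ v₄) := by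
    rw [Finset.prod_insert (by decide), Finset.prod_insert (by decide), Finset.prod_singleton,
      e1, e2, e3]
  have p1 : ∏ x ∈ ({0, 2, 3} : Finset (Fin 4)), gg q v₂ (N x)
      = gg q v₂ v₁ * (gg q v₂ v₃ * gg q v₂ v₄) := by
    rw [Finset.prod_insert (by decide), Finset.prod_insert (by decide), Finset.prod_singleton,
      e0, e2, e3]
  have p2 : ∏ x ∈ ({0, 1, 3} : Finset (Fin 4)), gg q v₃ (N x)
      = gg q v₃ v₁ * (gg q v₃ v₂ * gg q v₃ v₄) := by
    rw [Finset.prod_insert (by decide), Finset.prod_insert (by decide), Finset.prod_singleton,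
      e0, e1, e3]
  have p3 : ∏ x ∈ ({0, 1, 2} : Finset (Fin 4)), gg q v₄ (N x)
      = gg q v₄ v₁ * (gg q v₄ v₂ * gg q v₄ v₃) := by
    rw [Finset.prod_insert (by decide), Finset.prod_insert (by decide), Finset.prod_singleton,
      e0, e1, e2]
  simp only [e0, e1, e2, e3] at p0 p1 p2 p3 ⊢
  rw [p0, p1, p2, p3]
  ring


theorem stmt_10 :
    ∀ ε : ℝ, 0 < ε → ∃ C : ℝ, 0 < C ∧
      ∀ (q V : ℕ), 0 < q → 0 < V →
        (∑ v₁ ∈ Finset.Icc 1 V, ∑ v₂ ∈ Finset.Icc 1 V,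
          ∑ v₃ ∈ Finset.Icc 1 V, ∑ v₄ ∈ Finset.Icc 1 V,
            if 3 ≤ ({v₁, v₂, v₃, v₄} : Finset ℕ).card then
              (∑ i ∈ Finset.univ.filter (fun i : Fin 4 =>
                  (∏ j ∈ Finset.univ.filter (fun j : Fin 4 => j ≠ i),
                    ((![v₁, v₂, v₃, v₄] i : ℤ) - (![v₁, v₂, v₃, v₄] j : ℤ))) ≠ 0),
                (Int.gcd (∏ j ∈ Finset.univ.filter (fun j : Fin 4 => j ≠ i),
                    ((![v₁, v₂, v₃, v₄] i : ℤ) - (![v₁, v₂, v₃, v₄] j : ℤ))) q : ℝ))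
            else 0) ≤
          C * (V : ℝ) ^ 4 * (q : ℝ) ^ ε := by
  intro ε hε
  obtain ⟨C₀, hC₀1, hC₀⟩ := tau_bound (ε/3) (by linarith)
  refine ⟨32 * C₀ ^ 3, by positivity, ?_⟩
  intro q V hq hV
  set τ : ℕ := q.divisors.card with hτ
  have hnat : (∑ v₁ ∈ Icc 1 V, ∑ v₂ ∈ Icc 1 V, ∑ v₃ ∈ Icc 1 V, ∑ v₄ ∈ Icc 1 V,
      (gg q v₁ v₂ * gg q v₁ v₃ * gg q v₁ v₄ + gg q v₂ v₁ * gg q v₂ v₃ * gg q v₂ v₄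
        + gg q v₃ v₁ * gg q v₃ v₂ * gg q v₃ v₄ + gg q v₄ v₁ * gg q v₄ v₂ * gg q v₄ v₃))
      ≤ 4 * (V * (2 * (V * τ)) ^ 3) :=
    quad q V (2 * (V * τ)) (gg q) (fun v hv => sumg q V v hq hv)
  have hτ3 : ((τ : ℝ)) ^ 3 ≤ C₀ ^ 3 * (q : ℝ) ^ ε := by
    calc ((τ : ℝ)) ^ 3 ≤ (C₀ * (q : ℝ) ^ (ε/3)) ^ 3 :=
          pow_le_pow_left₀ (by positivity) (hC₀ q hq) 3
      _ = C₀ ^ 3 * ((q : ℝ) ^ (ε/3)) ^ 3 := by ring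
      _ = C₀ ^ 3 * (q : ℝ) ^ ε := by
          rw [← Real.rpow_natCast ((q:ℝ) ^ (ε/3)) 3, ← Real.rpow_mul (by positivity)]
          norm_num
  calc (∑ v₁ ∈ Finset.Icc 1 V, ∑ v₂ ∈ Finset.Icc 1 V,
          ∑ v₃ ∈ Finset.Icc 1 V, ∑ v₄ ∈ Finset.Icc 1 V,
            if 3 ≤ ({v₁, v₂, v₃, v₄} : Finset ℕ).card then
              (∑ i ∈ Finset.univ.filter (fun i : Fin 4 =>
                  (∏ j ∈ Finset.univ.filter (fun j : Fin 4 => j ≠ i),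
                    ((![v₁, v₂, v₃, v₄] i : ℤ) - (![v₁, v₂, v₃, v₄] j : ℤ))) ≠ 0),
                (Int.gcd (∏ j ∈ Finset.univ.filter (fun j : Fin 4 => j ≠ i),
                    ((![v₁, v₂, v₃, v₄] i : ℤ) - (![v₁, v₂, v₃, v₄] j : ℤ))) q : ℝ))
            else 0)
      ≤ ((∑ v₁ ∈ Icc 1 V, ∑ v₂ ∈ Icc 1 V, ∑ v₃ ∈ Icc 1 V, ∑ v₄ ∈ Icc 1 V,
          (gg q v₁ v₂ * gg q v₁ v₃ * gg q v₁ v₄ + gg q v₂ v₁ * gg q v₂ v₃ * gg q v₂ v₄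
            + gg q v₃ v₁ * gg q v₃ v₂ * gg q v₃ v₄
            + gg q v₄ v₁ * gg q v₄ v₂ * gg q v₄ v₃) : ℕ) : ℝ) := by
        push_cast
        refine Finset.sum_le_sum fun v₁ _ => Finset.sum_le_sum fun v₂ _ =>
          Finset.sum_le_sum fun v₃ _ => Finset.sum_le_sum fun v₄ _ => ?_
        split_ifs with hcard
        · have hpw := pointwise q hq v₁ v₂ v₃ v₄
          calc (∑ i ∈ Finset.univ.filter (fun i : Fin 4 =>
                  (∏ j ∈ Finset.univ.filter (fun j : Fin 4 => j ≠ i),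
                    ((![v₁, v₂, v₃, v₄] i : ℤ) - (![v₁, v₂, v₃, v₄] j : ℤ))) ≠ 0),
                (Int.gcd (∏ j ∈ Finset.univ.filter (fun j : Fin 4 => j ≠ i),
                    ((![v₁, v₂, v₃, v₄] i : ℤ) - (![v₁, v₂, v₃, v₄] j : ℤ))) q : ℝ))
              = ((∑ i ∈ Finset.univ.filter (fun i : Fin 4 =>
                  (∏ j ∈ Finset.univ.filter (fun j : Fin 4 => j ≠ i),
                    ((![v₁, v₂, v₃, v₄] i : ℤ) - (![v₁, v₂, v₃, v₄] j : ℤ))) ≠ 0),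
                Int.gcd (∏ j ∈ Finset.univ.filter (fun j : Fin 4 => j ≠ i),
                    ((![v₁, v₂, v₃, v₄] i : ℤ) - (![v₁, v₂, v₃, v₄] j : ℤ))) q : ℕ) : ℝ) := by
                push_cast
                rfl
            _ ≤ _ := by
                refine le_trans (Nat.cast_le.mpr hpw) ?_
                push_cast
                exact le_rfl
        · positivity
    _ ≤ ((4 * (V * (2 * (V * τ)) ^ 3) : ℕ) : ℝ) := Nat.cast_le.mpr hnat
    _ = 32 * (V : ℝ) ^ 4 * ((τ : ℝ)) ^ 3 := by push_cast; ring
    _ ≤ 32 * (V : ℝ) ^ 4 * (C₀ ^ 3 * (q : ℝ) ^ ε) := by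
        apply mul_le_mul_of_nonneg_left hτ3 (by positivity)
    _ = 32 * C₀ ^ 3 * (V : ℝ) ^ 4 * (q : ℝ) ^ ε := by ring
end
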